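/- Let E/F be a finite Galois extension of fields whose Galois group is cyclic of order t, generated by α. If C ∈ GL(d,E) satisfies C·C^α···C^{α^{t−1}} = I, then there exists a nonzero column vector v ∈ E^d such that C·v^α = v. -/

import Mathlib

set_option maxHeartbeats 1000000 in
/-- Lemma (1.2): if the Galois group of `E/F` is cyclic of order `t` generated by `α`,
and `C ∈ GL(d,E)` satisfies `C·C^α···C^{α^{t−1}} = I`, then there is a nonzero column
vector `v ∈ E^d` with `C·v^α = v`. -/
theorem glasby_howlett_lemma_1_2
    {F E : Type*} [Field F] [Field E] [Algebra F E]
    [FiniteDimensional F E] [IsGalois F E]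
    (t : ℕ) (α : E ≃ₐ[F] E) (hord : orderOf α = t)
    (hgen : ∀ σ : E ≃ₐ[F] E, σ ∈ Subgroup.zpowers α)
    {d : ℕ} (hd : 0 < d)
    (C : GL (Fin d) E)
    (hC : ((List.range t).map fun i =>
        (C : Matrix (Fin d) (Fin d) E).map ⇑(α ^ i)).prod = 1) :
    ∃ v : Fin d → E, v ≠ 0 ∧
      (C : Matrix (Fin d) (Fin d) E).mulVec (fun i => α (v i)) = v := by
  classical
  set Cm : Matrix (Fin d) (Fin d) E := (C : Matrix (Fin d) (Fin d) E) with hCm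
  set D : ℕ → Matrix (Fin d) (Fin d) E :=
    fun i => ((List.range i).map fun j => Cm.map ⇑(α ^ j)).prod with hD
  have ht : 0 < t := hord ▸ orderOf_pos α
  have hαt : α ^ t = 1 := hord ▸ pow_orderOf_eq_one α
  have hD0 : D 0 = 1 := by simp [hD]
  have hDt : D t = 1 := hC
  have hmapmul : ∀ M N : Matrix (Fin d) (Fin d) E,
      (M * N).map ⇑α = M.map ⇑α * N.map ⇑α := by
    intro M N
    exact Matrix.map_mul (f := (α : E →+* E))
  have hcomp : ∀ i, (Cm.map ⇑(α ^ i)).map ⇑α = Cm.map ⇑(α ^ (i + 1)) := by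
    intro i
    ext j k
    show α ((α ^ i) (Cm j k)) = (α ^ (i + 1)) (Cm j k)
    rw [pow_succ']
    rfl
  have hDsucc : ∀ i, D (i + 1) = D i * Cm.map ⇑(α ^ i) := by
    intro i
    simp [hD, List.range_succ]
  -- step identity: C * (D i)^α = D (i+1)
  have hstep : ∀ i, Cm * (D i).map ⇑α = D (i + 1) := by
    intro i
    induction i with
    | zero =>
      rw [hD0, hDsucc, hD0]
      have e1 : (1 : Matrix (Fin d) (Fin d) E).map ⇑α = 1 :=
        Matrix.map_one _ (map_zero α) (map_one α)
      have e2 : Cm.map ⇑(α ^ 0) = Cm := by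
        ext j k
        show (α ^ 0) (Cm j k) = Cm j k
        rw [pow_zero]
        rfl
      rw [e1, e2, mul_one, one_mul]
    | succ i ih =>
      rw [hDsucc i, hmapmul, ← mul_assoc, ih, hcomp, ← hDsucc]
  -- the averaging matrix
  set A : E → Matrix (Fin d) (Fin d) E :=
    fun x => ∑ i ∈ Finset.range t, (α ^ i) x • D i with hA
  have hfix : ∀ x, Cm * (A x).map ⇑α = A x := by
    intro x
    have hmap : (A x).map ⇑α
        = ∑ i ∈ Finset.range t, (α ^ (i + 1)) x • (D i).map ⇑α := by
      ext j k
      simp only [hA, Matrix.map_apply, Matrix.sum_apply, Matrix.smul_apply,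
        smul_eq_mul, map_sum, map_mul]
      refine Finset.sum_congr rfl fun i _ => ?_
      have h1 : α ((α ^ i) x) = (α ^ (i + 1)) x := by rw [pow_succ']; rfl
      rw [h1]
    rw [hmap, Finset.mul_sum]
    simp only [Matrix.mul_smul, hstep]
    set g : ℕ → Matrix (Fin d) (Fin d) E := fun i => (α ^ i) x • D i with hg
    have hgt : g t = g 0 := by simp only [hg, hαt, hD0, hDt, pow_zero]
    have h1 : (∑ i ∈ Finset.range t, g (i + 1)) + g 0
        = ∑ i ∈ Finset.range (t + 1), g i := (Finset.sum_range_succ' g t).symm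
    have h2 : ∑ i ∈ Finset.range (t + 1), g i
        = (∑ i ∈ Finset.range t, g i) + g t := Finset.sum_range_succ g t
    have h3 : (∑ i ∈ Finset.range t, g (i + 1)) + g 0
        = (∑ i ∈ Finset.range t, g i) + g 0 := by rw [h1, h2, hgt]
    exact add_right_cancel h3
  -- there is x with A x ≠ 0
  have hex : ∃ x, A x ≠ 0 := by
    by_contra h
    push_neg at h
    set j0 : Fin d := ⟨0, hd⟩ with hj0
    -- linear independence of the characters α^i, i < t
    have li : LinearIndependent E
        (fun i : Fin t => (⇑(α ^ (i : ℕ)) : E → E)) := by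
      have hli := linearIndependent_monoidHom E E
      have hinj : Function.Injective
          (fun i : Fin t => ((α ^ (i : ℕ)).toAlgHom.toRingHom.toMonoidHom : E →* E)) := by
        intro i j hij
        have hfun : (α ^ (i : ℕ)) = (α ^ (j : ℕ)) :=
          AlgEquiv.ext fun x => DFunLike.congr_fun hij x
        have := pow_injOn_Iio_orderOf (x := α) (by simpa [hord] using i.2)
          (by simpa [hord] using j.2) hfun
        exact Fin.ext this
      exact hli.comp _ hinj
    have hzero : ∀ i : Fin t, (D (i : ℕ)) j0 j0 = 0 := by
      have hsum0 : ∑ i : Fin t,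
          (D (i : ℕ) j0 j0) • (fun x => (α ^ (i : ℕ)) x : E → E) = 0 := by
        funext x
        have hx := congrArg (fun M => M j0 j0) (h x)
        simp only [hA, Matrix.sum_apply, Matrix.smul_apply, smul_eq_mul,
          Matrix.zero_apply] at hx
        rw [← Fin.sum_univ_eq_sum_range (fun i => (α ^ i) x * D i j0 j0) t] at hx
        simpa [Finset.sum_apply, mul_comm] using hx
      exact fun i => Fintype.linearIndependent_iff.mp li _ hsum0 i
    have h0 : (D 0) j0 j0 = 0 := by simpa using hzero ⟨0, ht⟩
    rw [hD0] at h0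
    simp [Matrix.one_apply] at h0
  obtain ⟨x, hx⟩ := hex
  obtain ⟨j, k, hjk⟩ : ∃ j k, A x j k ≠ 0 := by
    by_contra h
    push_neg at h
    exact hx (Matrix.ext h)
  refine ⟨fun i => A x i k, ?_, ?_⟩
  · intro h0
    exact hjk (congrFun h0 j)
  · funext i
    have := congrArg (fun M => M i k) (hfix x)
    simpa [Matrix.mul_apply, Matrix.mulVec, dotProduct, Matrix.map_apply] using this
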